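/- Under the Newton tracking primal–dual iteration, with Q := εI − α(I − 𝐖), for every t ≥ 0 the iterates satisfy the inequality (x* − x^t)ᵀQ(x* − x^t) − (x* − x^{t+1})ᵀQ(x* − x^{t+1}) + (1/α)(‖v* − v^t‖² − ‖v* − v^{t+1}‖²) ≥ (x^t − x^{t+1})ᵀQ(x^t − x^{t+1}) + (1/α)‖v^{t+1} − v^t‖² + μ_f‖x* − x^{t+1}‖² + 2⟨x* − x^{t+1}, ∇f(x^{t+1}) − ∇f(x^t) + ∇²f(x^t)(x^t − x^{t+1})⟩. -/

import Mathlib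

open Matrix Kronecker
open scoped InnerProductSpace

noncomputable section

/-- Local decision space `ℝ^p`. -/
abbrev Ep (p : ℕ) : Type := EuclideanSpace ℝ (Fin p)

/-- Stacked space `ℝ^{np}`. -/
abbrev Vnp (n p : ℕ) : Type := EuclideanSpace ℝ (Fin n × Fin p)

/-- The `i`-th block `x_i ∈ ℝ^p` of a stacked vector `x ∈ ℝ^{np}`. -/
def blk {n p : ℕ} (x : Vnp n p) (i : Fin n) : Ep p := WithLp.toLp 2 (fun j => x (i, j))

/-- Aggregate objective `f(x) = ∑ i, f_i(x_i)`. -/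
def aggF {n p : ℕ} (f : Fin n → Ep p → ℝ) (x : Vnp n p) : ℝ := ∑ i, f i (blk x i)

/-- Stacked gradient `∇f(x) = [∇f_1(x_1); …; ∇f_n(x_n)]`. -/
def aggGrad {n p : ℕ} (g : Fin n → Ep p → Ep p) (x : Vnp n p) : Vnp n p :=
  WithLp.toLp 2 (fun ij : Fin n × Fin p => g ij.1 (blk x ij.1) ij.2)

/-- Block-diagonal Hessian `∇²f(x)` applied to `w`. -/
def aggHess {n p : ℕ} (h : Fin n → Ep p → (Ep p →L[ℝ] Ep p)) (x w : Vnp n p) : Vnp n p :=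
  WithLp.toLp 2 (fun ij : Fin n × Fin p => h ij.1 (blk x ij.1) (blk w ij.1) ij.2)

/-- `𝐖 = W ⊗ I_p`. -/
def bigW {n : ℕ} (p : ℕ) (W : Matrix (Fin n) (Fin n) ℝ) :
    Matrix (Fin n × Fin p) (Fin n × Fin p) ℝ :=
  W ⊗ₖ (1 : Matrix (Fin p) (Fin p) ℝ)

/-- `I − 𝐖`. -/
def IWmat {n : ℕ} (p : ℕ) (W : Matrix (Fin n) (Fin n) ℝ) :
    Matrix (Fin n × Fin p) (Fin n × Fin p) ℝ :=
  1 - bigW p W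

/-- The square root of a positive semidefinite matrix, as `Matrix.PosSemidef.sqrt` was defined
in older Mathlib (removed since). -/
def Matrix.PosSemidef.sqrt {m : Type*} [Fintype m] [DecidableEq m]
    {A : Matrix m m ℝ} (hA : A.PosSemidef) : Matrix m m ℝ :=
  (hA.1.eigenvectorUnitary : Matrix m m ℝ) * diagonal ((↑) ∘ Real.sqrt ∘ hA.1.eigenvalues) *
    (star (hA.1.eigenvectorUnitary : Matrix m m ℝ))

lemma sqrt_herm {m : Type*} [Fintype m] [DecidableEq m] {A : Matrix m m ℝ} (hA : A.PosSemidef) :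
    hA.sqrt.IsHermitian := by
  unfold Matrix.PosSemidef.sqrt
  simp [IsHermitian, star_eq_conjTranspose, conjTranspose_mul, Matrix.mul_assoc,
    diagonal_conjTranspose]

lemma sqrt_mul_self' {m : Type*} [Fintype m] [DecidableEq m] {A : Matrix m m ℝ} (hA : A.PosSemidef) :
    hA.sqrt * hA.sqrt = A := by
  unfold Matrix.PosSemidef.sqrt
  conv_rhs => rw [hA.1.spectral_theorem, Unitary.conjStarAlgAut_apply]
  have hU : star (hA.1.eigenvectorUnitary : Matrix m m ℝ) * (hA.1.eigenvectorUnitary : Matrix m m ℝ) = 1 :=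
    Unitary.star_mul_self_of_mem hA.1.eigenvectorUnitary.2
  simp only [Matrix.mul_assoc]
  rw [← Matrix.mul_assoc (star _) _ (diagonal _ * _), hU, Matrix.one_mul, ← Matrix.mul_assoc (diagonal _),
    diagonal_mul_diagonal]
  congr 3
  ext i
  simp [Real.mul_self_sqrt (hA.eigenvalues_nonneg i)]

lemma blk_sub {n p : ℕ} (u w : Vnp n p) (i : Fin n) : blk (u - w) i = blk u i - blk w i := by
  ext j; simp [blk]

lemma inner_blk {n p : ℕ} (u w : Vnp n p) : ⟪u, w⟫_ℝ = ∑ i, ⟪blk u i, blk w i⟫_ℝ := by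
  simp only [PiLp.inner_apply, RCLike.inner_apply, conj_trivial]
  exact Fintype.sum_prod_type _

lemma norm_sq_blk {n p : ℕ} (u : Vnp n p) : ‖u‖ ^ 2 = ∑ i, ‖blk u i‖ ^ 2 := by
  rw [← real_inner_self_eq_norm_sq, inner_blk]
  exact Finset.sum_congr rfl (fun i _ => real_inner_self_eq_norm_sq _)

lemma smono_block {p : ℕ} {μf : ℝ} (g : Ep p → Ep p) (h : Ep p → (Ep p →L[ℝ] Ep p))
    (hh : ∀ z, HasFDerivAt g (h z) z)
    (hlow : ∀ z w, μf * ‖w‖ ^ 2 ≤ ⟪(h z) w, w⟫_ℝ)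
    (a b : Ep p) : μf * ‖a - b‖ ^ 2 ≤ ⟪a - b, g a - g b⟫_ℝ := by
  set u := a - b with hu
  set F : ℝ → ℝ := fun s => ⟪g (b + s • u), u⟫_ℝ - s * (μf * ‖u‖ ^ 2) with hF
  have hline : ∀ s : ℝ, HasDerivAt (fun s : ℝ => b + s • u) u s := by
    intro s
    simpa using ((hasDerivAt_id s).smul_const u).const_add b
  have hder : ∀ s : ℝ, HasDerivAt F (⟪(h (b + s • u)) u, u⟫_ℝ - μf * ‖u‖ ^ 2) s := by
    intro s
    have h1 : HasDerivAt (fun s : ℝ => g (b + s • u)) ((h (b + s • u)) u) s :=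
      (hh (b + s • u)).comp_hasDerivAt s (hline s)
    have h2 : HasDerivAt (fun s : ℝ => ⟪g (b + s • u), u⟫_ℝ)
        (⟪(h (b + s • u)) u, u⟫_ℝ) s := by
      simpa using (h1.inner ℝ (hasDerivAt_const s u))
    have h3 := h2.sub ((hasDerivAt_id s).mul_const (μf * ‖u‖ ^ 2))
    simp only [id, one_mul] at h3
    exact h3
  have hmono : Monotone F :=
    monotone_of_deriv_nonneg (fun s => (hder s).differentiableAt)
      (fun s => by rw [(hder s).deriv]; linarith [hlow (b + s • u) u])
  have h01 := hmono (show (0:ℝ) ≤ 1 by norm_num)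
  have hF0 : F 0 = ⟪g b, u⟫_ℝ := by simp [hF]
  have hF1 : F 1 = ⟪g a, u⟫_ℝ - μf * ‖u‖ ^ 2 := by
    have habu : b + u = a := by rw [hu]; abel
    simp [hF, habu]
  rw [hF0, hF1] at h01
  have : ⟪u, g a - g b⟫_ℝ = ⟪g a, u⟫_ℝ - ⟪g b, u⟫_ℝ := by
    rw [real_inner_comm, inner_sub_left]
  linarith

lemma smono_agg {n p : ℕ} {μf : ℝ} (g : Fin n → Ep p → Ep p)
    (h : Fin n → Ep p → (Ep p →L[ℝ] Ep p))
    (hh : ∀ i z, HasFDerivAt (g i) (h i z) z)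
    (hlow : ∀ i z w, μf * ‖w‖ ^ 2 ≤ ⟪(h i z) w, w⟫_ℝ)
    (a b : Vnp n p) :
    μf * ‖a - b‖ ^ 2 ≤ ⟪a - b, aggGrad g a - aggGrad g b⟫_ℝ := by
  rw [inner_blk, norm_sq_blk, Finset.mul_sum]
  apply Finset.sum_le_sum
  intro i _
  have hb : blk (aggGrad g a - aggGrad g b) i = g i (blk a i) - g i (blk b i) := by
    ext j; simp [blk, aggGrad]
  rw [hb, blk_sub]
  exact smono_block (g i) (h i) (hh i) (hlow i) (blk a i) (blk b i)

/-- The fundamental descent inequality of the Newton tracking primal–dual iteration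
(with `Q = εI − α(I−𝐖)`). -/
theorem newton_tracking_descent_inequality
    {n p : ℕ} (hn : 0 < n) (hp : 0 < p)
    (W : Matrix (Fin n) (Fin n) ℝ)
    (hWnonneg : ∀ i j, 0 ≤ W i j) (hWsymm : W.IsSymm)
    (hWstoch : W *ᵥ (fun _ => (1 : ℝ)) = fun _ => 1)
    (hWker : ∀ y : Fin n → ℝ, (1 - W) *ᵥ y = 0 ↔ ∃ c : ℝ, y = fun _ => c)
    (hpsd : (IWmat p W).PosSemidef)
    (f : Fin n → Ep p → ℝ) (g : Fin n → Ep p → Ep p)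
    (h : Fin n → Ep p → (Ep p →L[ℝ] Ep p))
    (μf Lf : ℝ) (hμpos : 0 < μf) (hμL : μf ≤ Lf)
    (hC2 : ∀ i, ContDiff ℝ 2 (f i))
    (hg : ∀ i z, HasGradientAt (f i) (g i z) z)
    (hh : ∀ i z, HasFDerivAt (g i) (h i z) z)
    (hlow : ∀ i z w, μf * ‖w‖ ^ 2 ≤ ⟪(h i z) w, w⟫_ℝ)
    (hup : ∀ i z w, ⟪(h i z) w, w⟫_ℝ ≤ Lf * ‖w‖ ^ 2)
    (α ε : ℝ) (hα : 0 < α) (hε : 0 < ε)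
    (x v : ℕ → Vnp n p)
    (hprimal : ∀ t, aggHess h (x t) (x t - x (t + 1)) + ε • (x t - x (t + 1)) =
      aggGrad g (x t) + Matrix.toEuclideanLin hpsd.sqrt (v t)
        + α • Matrix.toEuclideanLin (IWmat p W) (x t))
    (hdual : ∀ t, v (t + 1) = v t + α • Matrix.toEuclideanLin hpsd.sqrt (x (t + 1)))
    (xs vs : Vnp n p)
    (hK1 : aggGrad g xs + Matrix.toEuclideanLin hpsd.sqrt vs = 0)
    (hK2 : Matrix.toEuclideanLin hpsd.sqrt xs = 0)
    :
    ∀ t : ℕ,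
      ⟪xs - x t, ε • (xs - x t) - α • Matrix.toEuclideanLin (IWmat p W) (xs - x t)⟫_ℝ
        - ⟪xs - x (t + 1),
            ε • (xs - x (t + 1))
              - α • Matrix.toEuclideanLin (IWmat p W) (xs - x (t + 1))⟫_ℝ
        + (1 / α) * (‖vs - v t‖ ^ 2 - ‖vs - v (t + 1)‖ ^ 2)
      ≥ ⟪x t - x (t + 1),
            ε • (x t - x (t + 1))
              - α • Matrix.toEuclideanLin (IWmat p W) (x t - x (t + 1))⟫_ℝ
        + (1 / α) * ‖v (t + 1) - v t‖ ^ 2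
        + μf * ‖xs - x (t + 1)‖ ^ 2
        + 2 * ⟪xs - x (t + 1),
            aggGrad g (x (t + 1)) - aggGrad g (x t)
              + aggHess h (x t) (x t - x (t + 1))⟫_ℝ := by
  intro t
  set S : EuclideanSpace ℝ (Fin n × Fin p) →ₗ[ℝ] EuclideanSpace ℝ (Fin n × Fin p) :=
      Matrix.toEuclideanLin hpsd.sqrt with hSdef
  set M : EuclideanSpace ℝ (Fin n × Fin p) →ₗ[ℝ] EuclideanSpace ℝ (Fin n × Fin p) :=
      Matrix.toEuclideanLin (IWmat p W) with hMdef
  have hMsym : ∀ u w : Vnp n p, ⟪M u, w⟫_ℝ = ⟪u, M w⟫_ℝ :=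
    Matrix.isHermitian_iff_isSymmetric.mp hpsd.1
  have hSsym : ∀ u w : Vnp n p, ⟪S u, w⟫_ℝ = ⟪u, S w⟫_ℝ :=
    Matrix.isHermitian_iff_isSymmetric.mp (sqrt_herm hpsd)
  have hSS : ∀ u : Vnp n p, S (S u) = M u := by
    intro u
    have hmul : hpsd.sqrt * hpsd.sqrt = IWmat p W := sqrt_mul_self' hpsd
    rw [hSdef, hMdef]
    calc (Matrix.toEuclideanLin hpsd.sqrt) ((Matrix.toEuclideanLin hpsd.sqrt) u)
        = (Matrix.toEuclideanLin (hpsd.sqrt * hpsd.sqrt)) u := by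
          simp [Matrix.toEuclideanLin_apply, Matrix.mulVec_mulVec]
      _ = (Matrix.toEuclideanLin (IWmat p W)) u := by rw [hmul]
  have hp' := hprimal t
  have hdl := hdual t
  set a := x t with ha
  set b := x (t + 1) with hb
  set d := a - b with hd
  set e := xs - b with he
  have hxa : xs - a = e - d := by rw [he, hd]; abel
  -- dual increment
  have hw : v (t + 1) - v t = α • S b := by rw [hdl]; abel
  have hSe : S b = - S e := by rw [he, map_sub, hK2, zero_sub, neg_neg]
  have hSvs : S vs = - aggGrad g xs := eq_neg_of_add_eq_zero_right hK1
  have hSvt1 : S (v (t + 1)) = S (v t) + α • M b := by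
    rw [hdl, map_add, LinearMap.map_smul, hSS]
  have E3 : (1 / α) * ⟪vs - v (t + 1), v (t + 1) - v t⟫_ℝ
      = ⟪e, aggGrad g xs⟫_ℝ + ⟪e, S (v t)⟫_ℝ + α * ⟪e, M b⟫_ℝ := by
    have h1 : ⟪vs - v (t + 1), S b⟫_ℝ
        = ⟪e, aggGrad g xs⟫_ℝ + ⟪e, S (v t)⟫_ℝ + α * ⟪e, M b⟫_ℝ := by
      rw [hSe, inner_neg_right, ← hSsym (vs - v (t + 1)) e, map_sub, hSvs, hSvt1]
      simp only [inner_sub_left, inner_neg_left, inner_add_left, real_inner_smul_left]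
      rw [real_inner_comm (aggGrad g xs) e, real_inner_comm (S (v t)) e,
        real_inner_comm (M b) e]
      ring
    rw [hw, real_inner_smul_right, h1]
    field_simp
  have E4 := congrArg (fun z => ⟪e, z⟫_ℝ) hp'
  simp only [inner_add_right, real_inner_smul_right] at E4
  -- E4 : ⟪e, aggHess h a d⟫ + ε * ⟪e, d⟫ = ⟪e, aggGrad g a⟫ + ⟪e, S (v t)⟫ + α * ⟪e, M a⟫
  have hMa : M a = M d + M b := by rw [hd, map_sub]; abel
  have E5 : α * ⟪e, M a⟫_ℝ = α * ⟪e, M d⟫_ℝ + α * ⟪e, M b⟫_ℝ := by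
    rw [hMa, inner_add_right]; ring
  have E1 : ⟪e - d, ε • (e - d) - α • M (e - d)⟫_ℝ
      = ⟪e, ε • e - α • M e⟫_ℝ + ⟪d, ε • d - α • M d⟫_ℝ
        - 2 * (ε * ⟪e, d⟫_ℝ - α * ⟪e, M d⟫_ℝ) := by
    have h1 : ⟪d, M e⟫_ℝ = ⟪e, M d⟫_ℝ := by
      rw [← hMsym d e]; exact real_inner_comm _ _
    have h2 : ⟪d, e⟫_ℝ = ⟪e, d⟫_ℝ := real_inner_comm _ _
    simp only [map_sub, inner_sub_left, inner_sub_right, real_inner_smul_right]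
    rw [h1, h2]; ring
  have hvv : vs - v t = (vs - v (t + 1)) + (v (t + 1) - v t) := by abel
  have E2 : ‖vs - v t‖ ^ 2 = ‖vs - v (t + 1)‖ ^ 2
      + 2 * ⟪vs - v (t + 1), v (t + 1) - v t⟫_ℝ + ‖v (t + 1) - v t‖ ^ 2 := by
    rw [hvv, norm_add_sq_real]
  have E6 : μf * ‖e‖ ^ 2 ≤ ⟪e, aggGrad g xs⟫_ℝ - ⟪e, aggGrad g b⟫_ℝ := by
    have hs := smono_agg g h hh hlow xs b
    rw [inner_sub_right] at hs
    rw [he]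
    exact hs
  have E7 : ⟪e, aggGrad g b - aggGrad g a + aggHess h a d⟫_ℝ
      = ⟪e, aggGrad g b⟫_ℝ - ⟪e, aggGrad g a⟫_ℝ + ⟪e, aggHess h a d⟫_ℝ := by
    simp [inner_add_right, inner_sub_right]
  have hnn : 0 ≤ μf * ‖e‖ ^ 2 := mul_nonneg hμpos.le (sq_nonneg _)
  rw [hxa, E1, E2, E7]
  ring_nf
  ring_nf at E3 E4 E5 E6
  linarith [E3, E4, E5, E6, hnn]
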